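/- Let F be a field of odd characteristic, and let t ∈ F with t ≠ 0. The group SO₂(F) of matrices [[u,−v],[v,u]] with u²+v²=1 acts simply transitively on the level set {z ∈ F² : z₁² + z₂² = t}: for any two vectors x, y with ‖x‖² = ‖y‖² = t, there is a unique g ∈ SO₂(F) with gx = y. -/
import Mathlib


theorem SO2_simply_transitive (F : Type*) [Field F] (hchar : (2 : F) ≠ 0)
    (t : F) (ht : t ≠ 0) (x y : Fin 2 → F)
    (hx : (x 0) ^ 2 + (x 1) ^ 2 = t) (hy : (y 0) ^ 2 + (y 1) ^ 2 = t) :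
    ∃! g : Matrix (Fin 2) (Fin 2) F,
      (∃ u v : F, u ^ 2 + v ^ 2 = 1 ∧ g = !![u, -v; v, u]) ∧ g.mulVec x = y := by
  set u0 : F := (x 0 * y 0 + x 1 * y 1) / t with hu0
  set v0 : F := (x 0 * y 1 - x 1 * y 0) / t with hv0
  refine ⟨!![u0, -v0; v0, u0], ⟨⟨u0, v0, ?_, rfl⟩, ?_⟩, ?_⟩
  · rw [hu0, hv0]
    have key : (x 0 * y 0 + x 1 * y 1) ^ 2 + (x 0 * y 1 - x 1 * y 0) ^ 2 = t * t := by
      linear_combination (y 0 ^ 2 + y 1 ^ 2) * hx + t * hy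
    field_simp
    linear_combination key
  · funext i
    fin_cases i
    · simp [Matrix.mulVec, dotProduct, Fin.sum_univ_two, hu0, hv0]
      field_simp
      linear_combination (y 0) * hx
    · simp [Matrix.mulVec, dotProduct, Fin.sum_univ_two, hu0, hv0]
      field_simp
      linear_combination (y 1) * hx
  · rintro g ⟨⟨u, v, huv, rfl⟩, hg⟩
    have h0 := congrFun hg 0
    have h1 := congrFun hg 1
    simp [Matrix.mulVec, dotProduct, Fin.sum_univ_two] at h0 h1
    have hu : u = u0 := by
      rw [hu0]; field_simp
      linear_combination (x 0) * h0 + (x 1) * h1 - u * hx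
    have hv : v = v0 := by
      rw [hv0]; field_simp
      linear_combination (x 0) * h1 - (x 1) * h0 - v * hx
    rw [hu, hv]
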